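/- (Fundamental theorem, existence of basic feasible solutions.) Consider the constraint system A_E *ᵥ x = b_E, A_I *ᵥ x ≥ b_I, ℓ ≤ x ≤ u. Combine all constraint rows into the family r : (Fin m ⊕ Fin n ⊕ Fin d ⊕ Fin d) → (Fin d → ℝ) where r assigns to the first summand the rows of A_E, to the second summand the rows of A_I, to the third summand the standard basis vectors e_i (for the lower bounds x_i ≥ ℓ_i), and to the fourth summand the vectors −e_i (for the upper bounds −x_i ≥ −u_i), with corresponding right-hand sides β given by b_E, b_I, ℓ, and −u. Call a vector x a basic solution if there exists a finset S of indices with S.card = d such that the family of rows (r s)_{s ∈ S} is linearly independent over ℝ and r s ⬝ᵥ x = β s for every s ∈ S. If the system has a feasible solution (some x with A_E *ᵥ x = b_E, A_I *ᵥ x ≥ b_I, ℓ ≤ x ≤ u), then it has a basic feasible solution (a feasible x that is also basic). -/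

import Mathlib

open Matrix Submodule

-- dot product with vector of functional values computes the functional
private lemma dot_dual {d : ℕ} (f : (Fin d → ℝ) →ₗ[ℝ] ℝ) (w : Fin d → ℝ) :
    w ⬝ᵥ (fun i => f (Pi.single i 1)) = f w := by
  have hw : w = ∑ i, w i • (Pi.single i (1 : ℝ) : Fin d → ℝ) := by
    ext j
    simp [Pi.single_apply]
  conv_rhs => rw [hw]
  rw [map_sum]
  simp [dotProduct, _root_.map_smul, smul_eq_mul]

private lemma exists_perp_vec {d : ℕ} (W : Submodule ℝ (Fin d → ℝ)) (hW : W ≠ ⊤) :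
    ∃ c : Fin d → ℝ, c ≠ 0 ∧ ∀ w ∈ W, w ⬝ᵥ c = 0 := by
  obtain ⟨f, hf0, hfW⟩ :=
    Submodule.exists_dual_map_eq_bot_of_lt_top (p := W) hW.lt_top inferInstance
  refine ⟨fun i => f (Pi.single i 1), ?_, ?_⟩
  · intro hc
    apply hf0
    apply LinearMap.ext
    intro w
    have h := dot_dual f w
    rw [hc] at h
    simpa using h.symm
  · intro w hw
    rw [dot_dual f w]
    have : f w ∈ W.map f := ⟨w, hw, rfl⟩
    rwa [hfW, Submodule.mem_bot] at this

private lemma exists_basis_finset {d : ℕ} {ι : Type*} (r : ι → Fin d → ℝ) (T : Set ι)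
    (hspan : span ℝ (r '' T) = ⊤) :
    ∃ S : Finset ι, S.card = d ∧ LinearIndependent ℝ (fun s : S => r s) ∧ ↑S ⊆ T := by
  classical
  obtain ⟨b, hbT, hbspan, hbli⟩ := exists_linearIndependent ℝ (r '' T)
  rw [hspan] at hbspan
  have hfin : b.Finite := hbli.setFinite
  haveI : Fintype b := hfin.fintype
  have hcard : Fintype.card b = d := by
    have h1 : Module.finrank ℝ (span ℝ b) = b.toFinset.card :=
      finrank_span_set_eq_card hbli
    rw [hbspan, finrank_top, Module.finrank_fin_fun, Set.toFinset_card] at h1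
    exact h1.symm
  -- choose index preimages
  have hchoice : ∀ v : b, ∃ s : ι, s ∈ T ∧ r s = (v : Fin d → ℝ) := by
    intro v
    obtain ⟨s, hs, hrs⟩ := hbT v.2
    exact ⟨s, hs, hrs⟩
  choose g hgT hgr using hchoice
  have hginj : Function.Injective g := by
    intro v₁ v₂ h
    apply Subtype.ext
    rw [← hgr v₁, ← hgr v₂, h]
  refine ⟨(Finset.univ : Finset b).image g, ?_, ?_, ?_⟩
  · rw [Finset.card_image_of_injective _ hginj, Finset.card_univ]
    exact hcard
  · have hmem : ∀ s : ((Finset.univ : Finset b).image g : Finset ι), r (s : ι) ∈ b := by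
      rintro ⟨s, hs⟩
      obtain ⟨v, -, rfl⟩ := Finset.mem_image.1 hs
      rw [hgr v]
      exact v.2
    have := hbli.comp (fun s : ((Finset.univ : Finset b).image g : Finset ι) =>
        (⟨r (s : ι), hmem s⟩ : b)) ?_
    · exact this
    · rintro ⟨s₁, hs₁⟩ ⟨s₂, hs₂⟩ h
      have h' : r s₁ = r s₂ := congrArg Subtype.val h
      obtain ⟨v₁, -, rfl⟩ := Finset.mem_image.1 hs₁
      obtain ⟨v₂, -, rfl⟩ := Finset.mem_image.1 hs₂
      have : v₁ = v₂ := by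
        apply Subtype.ext
        rw [← hgr v₁, ← hgr v₂, h']
      subst this
      rfl
  · intro s hs
    obtain ⟨v, -, rfl⟩ := Finset.mem_image.1 (by exact_mod_cast hs)
    exact hgT v

private lemma aux_main {d : ℕ} {ι : Type*} [Fintype ι] (r : ι → Fin d → ℝ) (β : ι → ℝ)
    (E : Set ι)
    (hbd : ∀ c : Fin d → ℝ, c ≠ 0 → ∃ s, r s ⬝ᵥ c < 0) :
    ∀ (k : ℕ) (x : Fin d → ℝ),
      (∀ s, β s ≤ r s ⬝ᵥ x) → (∀ s ∈ E, r s ⬝ᵥ x = β s) →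
      d - Module.finrank ℝ (span ℝ (r '' {s | r s ⬝ᵥ x = β s})) ≤ k →
      ∃ y, (∀ s, β s ≤ r s ⬝ᵥ y) ∧ (∀ s ∈ E, r s ⬝ᵥ y = β s) ∧
        ∃ S : Finset ι, S.card = d ∧ LinearIndependent ℝ (fun s : S => r s) ∧
          ∀ s ∈ S, r s ⬝ᵥ y = β s := by
  classical
  intro k
  induction k with
  | zero =>
    intro x hx hxE hk
    set T := {s | r s ⬝ᵥ x = β s} with hT
    have htop : span ℝ (r '' T) = ⊤ := by
      apply Submodule.eq_top_of_finrank_eq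
      have hle : Module.finrank ℝ (span ℝ (r '' T)) ≤ Module.finrank ℝ (Fin d → ℝ) :=
        Submodule.finrank_le _
      rw [Module.finrank_fin_fun] at hle ⊢
      omega
    obtain ⟨S, hScard, hSli, hST⟩ := exists_basis_finset r T htop
    exact ⟨x, hx, hxE, S, hScard, hSli, fun s hs => hST hs⟩
  | succ k ih =>
    intro x hx hxE hk
    set T := {s | r s ⬝ᵥ x = β s} with hT
    by_cases htop : span ℝ (r '' T) = ⊤
    · obtain ⟨S, hScard, hSli, hST⟩ := exists_basis_finset r T htop
      exact ⟨x, hx, hxE, S, hScard, hSli, fun s hs => hST hs⟩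
    · -- find improving direction
      obtain ⟨c, hc0, hcperp⟩ := exists_perp_vec _ htop
      have hcT : ∀ s ∈ T, r s ⬝ᵥ c = 0 := fun s hs =>
        hcperp _ (subset_span (Set.mem_image_of_mem r hs))
      obtain ⟨s₁, hs₁⟩ := hbd c hc0
      set D : Finset ι := Finset.univ.filter (fun s => r s ⬝ᵥ c < 0) with hD
      have hDne : D.Nonempty := ⟨s₁, by simp [hD, hs₁]⟩
      set ratio : ι → ℝ := fun s => (r s ⬝ᵥ x - β s) / (-(r s ⬝ᵥ c)) with hratio
      obtain ⟨s₀, hs₀D, hs₀min⟩ := D.exists_min_image ratio hDne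
      have hs₀neg : r s₀ ⬝ᵥ c < 0 := (Finset.mem_filter.1 hs₀D).2
      set t := ratio s₀ with ht
      have ht0 : 0 ≤ t :=
        div_nonneg (sub_nonneg.2 (hx s₀)) (by linarith)
      set y := x + t • c with hy
      have hyval : ∀ s, r s ⬝ᵥ y = r s ⬝ᵥ x + t * (r s ⬝ᵥ c) := by
        intro s
        simp [hy, dotProduct_add, dotProduct_smul, smul_eq_mul]
      have hyfeas : ∀ s, β s ≤ r s ⬝ᵥ y := by
        intro s
        rw [hyval s]
        rcases lt_or_ge (r s ⬝ᵥ c) 0 with hneg | hpos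
        · have hsD : s ∈ D := Finset.mem_filter.2 ⟨Finset.mem_univ _, hneg⟩
          have hts : t ≤ ratio s := hs₀min s hsD
          have h1 : t * (-(r s ⬝ᵥ c)) ≤ r s ⬝ᵥ x - β s := by
            rw [← le_div_iff₀ (by linarith : (0:ℝ) < -(r s ⬝ᵥ c))]
            exact hts
          linarith
        · nlinarith [mul_nonneg ht0 hpos, hx s]
      have hyE : ∀ s ∈ E, r s ⬝ᵥ y = β s := by
        intro s hs
        rw [hyval s, hcT s (hxE s hs), mul_zero, add_zero]
        exact hxE s hs
      -- tight set grows
      set T' := {s | r s ⬝ᵥ y = β s} with hT'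
      have hTT' : T ⊆ T' := by
        intro s hs
        have := hcT s hs
        simp only [hT', Set.mem_setOf_eq, hyval s, this, mul_zero, add_zero]
        exact hs
      have hs₀T' : s₀ ∈ T' := by
        simp only [hT', Set.mem_setOf_eq, hyval s₀]
        have hne : r s₀ ⬝ᵥ c ≠ 0 := ne_of_lt hs₀neg
        have h2 : t * (r s₀ ⬝ᵥ c) = -(r s₀ ⬝ᵥ x - β s₀) := by
          show ratio s₀ * (r s₀ ⬝ᵥ c) = -(r s₀ ⬝ᵥ x - β s₀)
          simp only [hratio]
          rw [div_neg, neg_mul, div_mul_cancel₀ _ hne]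
        rw [h2]; ring
      have hs₀notW : r s₀ ∉ span ℝ (r '' T) := by
        intro hmem
        exact absurd (hcperp _ hmem) (ne_of_lt hs₀neg)
      have hlt : span ℝ (r '' T) < span ℝ (r '' T') := by
        refine lt_of_le_of_ne (span_mono (Set.image_mono hTT')) ?_
        intro heq
        exact hs₀notW (heq ▸ subset_span (Set.mem_image_of_mem r hs₀T'))
      have hfr : Module.finrank ℝ (span ℝ (r '' T)) <
          Module.finrank ℝ (span ℝ (r '' T')) :=
        Submodule.finrank_lt_finrank_of_lt hlt
      have hWlt : Module.finrank ℝ (span ℝ (r '' T)) < d := by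
        have := Submodule.finrank_lt htop
        rwa [Module.finrank_fin_fun] at this
      exact ih y hyfeas hyE (by rw [← hT']; omega)

theorem facet_basic_feasible_exists (d m n : ℕ)
    (A_E : Matrix (Fin m) (Fin d) ℝ) (A_I : Matrix (Fin n) (Fin d) ℝ)
    (b_E : Fin m → ℝ) (b_I : Fin n → ℝ) (ℓ u : Fin d → ℝ)
    (r : Fin m ⊕ Fin n ⊕ Fin d ⊕ Fin d → Fin d → ℝ)
    (β : Fin m ⊕ Fin n ⊕ Fin d ⊕ Fin d → ℝ)
    (hr : r = Sum.elim (fun i => A_E i)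
          (Sum.elim (fun j => A_I j)
            (Sum.elim (fun i => Pi.single i (1 : ℝ))
              (fun i => -Pi.single i (1 : ℝ)))))
    (hβ : β = Sum.elim b_E (Sum.elim b_I (Sum.elim ℓ (fun i => -u i))))
    (hfeas : ∃ x : Fin d → ℝ, A_E *ᵥ x = b_E ∧ A_I *ᵥ x ≥ b_I ∧ ℓ ≤ x ∧ x ≤ u) :
    ∃ x : Fin d → ℝ,
      (A_E *ᵥ x = b_E ∧ A_I *ᵥ x ≥ b_I ∧ ℓ ≤ x ∧ x ≤ u) ∧
      (∃ S : Finset (Fin m ⊕ Fin n ⊕ Fin d ⊕ Fin d),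
        S.card = d ∧
        LinearIndependent ℝ (fun s : S => r s) ∧
        ∀ s ∈ S, r s ⬝ᵥ x = β s) := by
  subst hr hβ
  obtain ⟨x₀, hE₀, hI₀, hl₀, hu₀⟩ := hfeas
  set r := Sum.elim (fun i => A_E i)
      (Sum.elim (fun j => A_I j)
        (Sum.elim (fun i => Pi.single i (1 : ℝ))
          (fun i => -Pi.single i (1 : ℝ)))) with hrdef
  set β := Sum.elim b_E (Sum.elim b_I (Sum.elim ℓ (fun i => -u i))) with hβdef
  -- translation between feasibility and the row formulation
  have hfeas_iff : ∀ x : Fin d → ℝ,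
      ((∀ s, β s ≤ r s ⬝ᵥ x) ∧ ∀ s ∈ Set.range (Sum.inl : Fin m → _), r s ⬝ᵥ x = β s) ↔
      (A_E *ᵥ x = b_E ∧ A_I *ᵥ x ≥ b_I ∧ ℓ ≤ x ∧ x ≤ u) := by
    intro x
    constructor
    · rintro ⟨hge, heq⟩
      refine ⟨funext fun i => heq (Sum.inl i) ⟨i, rfl⟩, fun j => hge (Sum.inr (Sum.inl j)),
        fun i => ?_, fun i => ?_⟩
      · have := hge (Sum.inr (Sum.inr (Sum.inl i)))
        simpa [hrdef, hβdef, single_dotProduct] using this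
      · have := hge (Sum.inr (Sum.inr (Sum.inr i)))
        simp only [hrdef, hβdef, Sum.elim_inr, neg_dotProduct, single_dotProduct, one_mul,
          neg_le_neg_iff] at this
        linarith
    · rintro ⟨hE, hI, hl, hu⟩
      constructor
      · rintro (i | j | i | i)
        · exact le_of_eq (congrFun hE.symm i)
        · exact hI j
        · simpa [hrdef, hβdef, single_dotProduct] using hl i
        · simp only [hrdef, hβdef, Sum.elim_inr, neg_dotProduct, single_dotProduct, one_mul]
          have := hu i
          linarith
      · rintro s ⟨i, rfl⟩
        exact congrFun hE i
  -- boundedness condition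
  have hbd : ∀ c : Fin d → ℝ, c ≠ 0 → ∃ s, r s ⬝ᵥ c < 0 := by
    intro c hc
    obtain ⟨i, hi⟩ := Function.ne_iff.1 hc
    rcases lt_or_gt_of_ne hi with h | h
    · exact ⟨Sum.inr (Sum.inr (Sum.inl i)), by
        simpa [hrdef, single_dotProduct] using h⟩
    · refine ⟨Sum.inr (Sum.inr (Sum.inr i)), ?_⟩
      simp only [hrdef, Sum.elim_inr, neg_dotProduct, single_dotProduct, one_mul]
      simpa using h
  have hx₀' := (hfeas_iff x₀).2 ⟨hE₀, hI₀, hl₀, hu₀⟩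
  obtain ⟨y, hy1, hy2, S, hScard, hSli, hStight⟩ :=
    aux_main r β (Set.range Sum.inl) hbd d x₀ hx₀'.1 hx₀'.2 (by omega)
  exact ⟨y, (hfeas_iff y).1 ⟨hy1, hy2⟩, S, hScard, hSli, hStight⟩
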